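/- arXiv:2106.09299 — 3 statements merged into one kernel-verified Lean document; each statement's English description precedes it below -/
import Mathlib

section
/- Let H ⊂ F(T) be a covering family, {f; f_t, t ∈ T} ⊂ Γ(X) and E ∩ dom f ≠ ∅. Then H-reverse strong duality holds (i.e., min(P) = sup(D_H) ∈ ℝ, the primal value being attained) if and only if the function φ_H is subdifferentiable at 0_{X*}; in that case ∂φ_H(0_{X*}) = sol(P), the set of optimal solutions of (P). -/
open Pointwise Filter Topology

noncomputable section

section Defs

variable {T : Type*} {X : Type*} [AddCommGroup X] [Module ℝ X] [TopologicalSpace X]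
  [IsTopologicalAddGroup X] [ContinuousSMul ℝ X] [LocallyConvexSpace ℝ X] [T2Space X]

/-- The epigraph of an extended-real-valued function, as a subset of `Z × ℝ`. -/
def epiSet {Z : Type*} (f : Z → EReal) : Set (Z × ℝ) := {p | f p.1 ≤ (p.2 : EReal)}

/-- `f : Z → ℝ ∪ {+∞}` is a proper convex function (never `⊥`, not identically `⊤`,
with convex epigraph). -/
def IsProperConvex {Z : Type*} [AddCommGroup Z] [Module ℝ Z] (f : Z → EReal) : Prop :=
  (∀ x, f x ≠ ⊥) ∧ (∃ x, f x ≠ ⊤) ∧ Convex ℝ (epiSet f)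

/-- Membership in `Γ(Z)`: proper convex and lower semicontinuous. -/
def InGamma {Z : Type*} [AddCommGroup Z] [Module ℝ Z] [TopologicalSpace Z] (f : Z → EReal) : Prop :=
  IsProperConvex f ∧ LowerSemicontinuous f

/-- The Lagrangian `f + ∑_{t ∈ H} λ_t f_t` (with the convention `0·(+∞) = 0`,
which holds for `EReal` multiplication). -/
def lagFn (f : X → EReal) (ft : T → X → EReal) (H : Finset T) (lam : T → ℝ) : X → EReal :=
  fun x => f x + ∑ t ∈ H, (lam t : EReal) * ft t x

/-- The feasible set `E` of (P). -/
def feasSet (ft : T → X → EReal) : Set X := {x | ∀ t, ft t x ≤ 0}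

/-- The optimal value `inf (P)`. -/
def primalVal (f : X → EReal) (ft : T → X → EReal) : EReal := ⨅ x ∈ feasSet ft, f x

/-- The optimal solution set `sol (P)`. -/
def solP (f : X → EReal) (ft : T → X → EReal) : Set X :=
  {x | x ∈ feasSet ft ∧ f x = primalVal f ft}

/-- The optimal value `sup (D_H)` of the `H`-dual problem. -/
def dualVal (f : X → EReal) (ft : T → X → EReal) (Hfam : Set (Finset T)) : EReal :=
  ⨆ H ∈ Hfam, ⨆ lam ∈ {l : T → ℝ | ∀ t ∈ H, 0 ≤ l t}, ⨅ x : X, lagFn f ft H lam x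

/-- The optimal value `sup (D)` of the classical Lagrangian-Haar dual, with
multipliers `λ ∈ ℝ_+^{(T)}` (finitely supported). -/
def dualHaar (f : X → EReal) (ft : T → X → EReal) : EReal :=
  ⨆ lam ∈ {l : T →₀ ℝ | ∀ t, 0 ≤ l t},
    ⨅ x : X, f x + ∑ t ∈ lam.support, ((lam t : ℝ) : EReal) * ft t x

/-- `sup (D_m)`: ordinary Lagrangian dual of the finite subproblem `(P_m)`. -/
def dualValFin (f : X → EReal) (ft : ℕ → X → EReal) (m : ℕ) : EReal :=
  ⨆ lam ∈ {l : ℕ → ℝ | ∀ k ∈ Finset.range m, 0 ≤ l k},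
    ⨅ x : X, f x + ∑ k ∈ Finset.range m, (lam k : EReal) * ft k x

/-- `inf (P_m)`: optimal value of the finite subproblem `(P_m)`. -/
def primalValFin (f : X → EReal) (ft : ℕ → X → EReal) (m : ℕ) : EReal :=
  ⨅ x ∈ {x : X | ∀ k ∈ Finset.range m, ft k x ≤ 0}, f x

/-- A family of finite subsets of `T` is covering if its union is all of `T`. -/
def CoveringFam (Hfam : Set (Finset T)) : Prop := (⋃ H ∈ Hfam, (H : Set T)) = Set.univ

/-- A family of finite subsets of `T` is directed (by inclusion). -/
def DirectedFam (Hfam : Set (Finset T)) : Prop :=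
  ∀ H ∈ Hfam, ∀ K ∈ Hfam, ∃ L ∈ Hfam, (H : Set T) ∪ (K : Set T) ⊆ (L : Set T)

/-- Legendre-Fenchel conjugate of `f : X → ℝ̄`, as a function on the dual `X*`
(with its weak* topology). -/
def conj (f : X → EReal) (p : WeakDual ℝ X) : EReal := ⨆ x : X, ((p x : EReal) - f x)

/-- Legendre-Fenchel conjugate of `g : X* → ℝ̄` w.r.t. the duality `⟨X*, X⟩`. -/
def conjDual (g : WeakDual ℝ X → EReal) (x : X) : EReal :=
  ⨆ p : WeakDual ℝ X, ((p x : EReal) - g p)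

/-- The function `φ_H := inf_{H ∈ 𝓗, λ ∈ ℝ_+^H} (f + ∑_{t ∈ H} λ_t f_t)^*`. -/
def phiVal (f : X → EReal) (ft : T → X → EReal) (Hfam : Set (Finset T))
    (p : WeakDual ℝ X) : EReal :=
  ⨅ H ∈ Hfam, ⨅ lam ∈ {l : T → ℝ | ∀ t ∈ H, 0 ≤ l t}, conj (lagFn f ft H lam) p

/-- Subdifferential at `a ∈ X*` of a function `g : X* → ℝ̄`, a subset of `X`
(empty when `g a ∉ ℝ`). -/
def dualSubdiff (g : WeakDual ℝ X → EReal) (a : WeakDual ℝ X) : Set X :=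
  {x | (g a ≠ ⊤ ∧ g a ≠ ⊥) ∧ ∀ q : WeakDual ℝ X, g a + (((q x - a x : ℝ)) : EReal) ≤ g q}

/-- Fenchel subdifferential of `g : X → ℝ̄` at `x̄ ∈ X`, a subset of `X*`. -/
def fenchelSubdiff (g : X → EReal) (xb : X) : Set (WeakDual ℝ X) :=
  {p | ∀ x, g xb + (((p x - p xb : ℝ)) : EReal) ≤ g x}

/-- The set `𝓐_H = ⋃_{H ∈ 𝓗, λ ∈ ℝ_+^H} epi (f + ∑_{t∈H} λ_t f_t)^* ⊆ X* × ℝ`. -/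
def AHset (f : X → EReal) (ft : T → X → EReal) (Hfam : Set (Finset T)) :
    Set (WeakDual ℝ X × ℝ) :=
  ⋃ H ∈ Hfam, ⋃ lam ∈ {l : T → ℝ | ∀ t ∈ H, 0 ≤ l t}, epiSet (conj (lagFn f ft H lam))

/-- `A` is closed convex regarding `B`: `cl (co A) ∩ B = A ∩ B`. -/
def ClosedConvexRegarding {Z : Type*} [AddCommGroup Z] [Module ℝ Z] [TopologicalSpace Z]
    (A B : Set Z) : Prop :=
  closure (convexHull ℝ A) ∩ B = A ∩ B

/-- Recession cone of a set. -/
def recCone {Z : Type*} [AddCommGroup Z] [SMul ℝ Z] (A : Set Z) : Set Z :=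
  {v | ∀ a ∈ A, ∀ r : ℝ, 0 ≤ r → a + r • v ∈ A}

/-- Recession function `h_∞`, defined through `epi h_∞ = (epi h)_∞`. -/
def recFn (h : X → EReal) (x : X) : EReal :=
  ⨅ r ∈ {r : ℝ | (x, r) ∈ recCone (epiSet h)}, (r : EReal)

/-- The recession cone `(P)_∞ = ∩_{t∈T} [(f_t)_∞ ≤ 0] ∩ [f_∞ ≤ 0]` of problem (P). -/
def PinfSet (f : X → EReal) (ft : T → X → EReal) : Set X :=
  {x | recFn f x ≤ 0 ∧ ∀ t, recFn (ft t) x ≤ 0}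

/-- A subset is a linear subspace. -/
def IsLinSubspace {Z : Type*} [AddCommGroup Z] [Module ℝ Z] (S : Set Z) : Prop :=
  ∃ V : Submodule ℝ Z, S = ↑V

/-- Negative polar cone `A^-` of a set `A ⊆ X*`. -/
def negPolar (A : Set (WeakDual ℝ X)) : Set X := {x | ∀ p ∈ A, p x ≤ 0}

/-- The convex cone generated by a set: `cone A = ℝ₊ (co A)`. -/
def coneGen {Z : Type*} [AddCommGroup Z] [Module ℝ Z] (A : Set Z) : Set Z :=
  {z | ∃ r : ℝ, 0 ≤ r ∧ ∃ a ∈ convexHull ℝ A, z = r • a}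

/-- A set is weakly compact: compact for the weak topology `σ(X, X*)`. -/
def WeaklyCompactSet (S : Set X) : Prop := IsCompact (toWeakSpace ℝ X '' S)

/-- A set is weakly locally compact: locally compact in the weak topology. -/
def WeaklyLocallyCompactSet (S : Set X) : Prop :=
  LocallyCompactSpace ↥(toWeakSpace ℝ X '' S)

/-- `h` is weakly inf-locally compact: every sublevel set `[h ≤ r]`, `r ∈ ℝ`,
is weakly locally compact. -/
def InfWeaklyLocallyCompact (h : X → EReal) : Prop :=
  ∀ r : ℝ, WeaklyLocallyCompactSet {x | h x ≤ (r : EReal)}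

/-- The Mackey topology `τ(X*, X)` on `X*`: the topology of uniform convergence on
convex balanced weakly compact subsets of `X`. -/
def mackeyTopology (X : Type*) [AddCommGroup X] [Module ℝ X] [TopologicalSpace X]
    [IsTopologicalAddGroup X] [ContinuousSMul ℝ X] [LocallyConvexSpace ℝ X] [T2Space X] :
    TopologicalSpace (WeakDual ℝ X) :=
  TopologicalSpace.induced
    (fun p => UniformOnFun.ofFun {K : Set X | Convex ℝ K ∧ Balanced ℝ K ∧ WeaklyCompactSet K}
      (fun x => p x))
    inferInstance

/-- Interior of `S` relative to `A` for the topology `τ`. -/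
def relIntIn {Z : Type*} (τ : TopologicalSpace Z) (A S : Set Z) : Set Z :=
  {z | z ∈ S ∧ ∃ U, τ.IsOpen U ∧ z ∈ U ∧ U ∩ A ⊆ S}

/-- `g : X* → ℝ̄` is `τ(X*,X)`-quasicontinuous: the affine hull of `dom g` is
Mackey-closed and of finite codimension, the Mackey relative interior of `dom g`
is non-empty, and the restriction of `g` to `aff (dom g)` is Mackey-continuous
on `ri (dom g)`. -/
def MackeyQuasicontinuous (g : WeakDual ℝ X → EReal) : Prop :=
  @IsClosed _ (mackeyTopology X)
    ((affineSpan ℝ {p : WeakDual ℝ X | g p ≠ ⊤}) : Set (WeakDual ℝ X)) ∧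
  FiniteDimensional ℝ (WeakDual ℝ X ⧸ (affineSpan ℝ {p : WeakDual ℝ X | g p ≠ ⊤}).direction) ∧
  (relIntIn (mackeyTopology X) ((affineSpan ℝ {p : WeakDual ℝ X | g p ≠ ⊤}) : Set (WeakDual ℝ X))
    {p : WeakDual ℝ X | g p ≠ ⊤}).Nonempty ∧
  ∀ p ∈ relIntIn (mackeyTopology X)
      ((affineSpan ℝ {p : WeakDual ℝ X | g p ≠ ⊤}) : Set (WeakDual ℝ X))
      {p : WeakDual ℝ X | g p ≠ ⊤},
    @ContinuousWithinAt _ _ (mackeyTopology X) _ g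
      ((affineSpan ℝ {p : WeakDual ℝ X | g p ≠ ⊤}) : Set (WeakDual ℝ X)) p

/-- The set `𝓚_H = ⋃_{H ∈ 𝓗} cone ({(a_t*, b_t) : t ∈ H} + {0} × ℝ₊)`. -/
def KHset (a : T → WeakDual ℝ X) (b : T → ℝ) (Hfam : Set (Finset T)) :
    Set (WeakDual ℝ X × ℝ) :=
  ⋃ H ∈ Hfam, coneGen ((fun t => (a t, b t)) '' (H : Set T) + ({0} ×ˢ Set.Ici (0 : ℝ)))

end Defs

section Aux

/-! ### EReal auxiliary lemmas -/

lemma er_mul_ne_bot {c : ℝ} (hc : 0 ≤ c) {P : EReal} (hP : P ≠ ⊥) : (c : EReal) * P ≠ ⊥ := by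
  rcases eq_or_lt_of_le hc with h | h
  · rw [← h]; simp
  · induction P with
    | bot => exact absurd rfl hP
    | coe p => rw [← EReal.coe_mul]; exact EReal.coe_ne_bot _
    | top => rw [EReal.coe_mul_top_of_pos h]; simp

lemma er_mul_nonpos {c : ℝ} (hc : 0 ≤ c) {P : EReal} (hP : P ≤ 0) : (c : EReal) * P ≤ 0 := by
  have := mul_le_mul_of_nonneg_left hP (by exact_mod_cast hc : (0 : EReal) ≤ (c : EReal))
  simpa using this

lemma er_distrib {c : ℝ} (hc : 0 ≤ c) {P Q : EReal} (hP : P ≠ ⊥) (hQ : Q ≠ ⊥) :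
    (c : EReal) * (P + Q) = (c : EReal) * P + (c : EReal) * Q := by
  rcases eq_or_lt_of_le hc with h | h
  · rw [← h]; simp
  · induction P with
    | bot => exact absurd rfl hP
    | coe p =>
      induction Q with
      | bot => exact absurd rfl hQ
      | coe q => norm_cast; ring
      | top =>
        rw [EReal.add_top_of_ne_bot (EReal.coe_ne_bot p), EReal.coe_mul_top_of_pos h,
          ← EReal.coe_mul, EReal.add_top_of_ne_bot (EReal.coe_ne_bot _)]
    | top =>
      rw [EReal.top_add_of_ne_bot hQ, EReal.coe_mul_top_of_pos h,
        EReal.top_add_of_ne_bot (er_mul_ne_bot hc hQ)]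

lemma er_sum_ne_bot {ι : Type*} {s : Finset ι} {g : ι → EReal} (hg : ∀ i ∈ s, g i ≠ ⊥) :
    ∑ i ∈ s, g i ≠ ⊥ := by
  induction s using Finset.cons_induction with
  | empty => simp
  | @cons a s ha ih =>
    rw [Finset.sum_cons]
    intro hb
    rcases EReal.add_eq_bot_iff.1 hb with h | h
    · exact hg a (Finset.mem_cons_self a s) h
    · exact ih (fun i hi => hg i (Finset.mem_cons_of_mem hi)) h

lemma er_mul_sum {c : ℝ} (hc : 0 ≤ c) {ι : Type*} (s : Finset ι) (g : ι → EReal)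
    (hg : ∀ i ∈ s, g i ≠ ⊥) :
    (c : EReal) * ∑ i ∈ s, g i = ∑ i ∈ s, (c : EReal) * g i := by
  induction s using Finset.cons_induction with
  | empty => simp
  | @cons a s ha ih =>
    rw [Finset.sum_cons, Finset.sum_cons,
      er_distrib hc (hg a (Finset.mem_cons_self a s))
        (er_sum_ne_bot fun i hi => hg i (Finset.mem_cons_of_mem hi)),
      ih (fun i hi => hg i (Finset.mem_cons_of_mem hi))]

lemma er_neg_iSup {ι : Sort*} (g : ι → EReal) : (⨅ i, -g i) = -⨆ i, g i := by
  refine le_antisymm ?_ (le_iInf fun i => EReal.neg_le_neg_iff.2 (le_iSup g i))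
  have h : (⨆ i, g i) ≤ -⨅ i, -g i :=
    iSup_le fun i => EReal.le_neg_of_le_neg (iInf_le (fun i => -g i) i)
  exact EReal.le_neg_of_le_neg h

lemma er_neg_iInf {ι : Sort*} (g : ι → EReal) : (⨆ i, -g i) = -⨅ i, g i := by
  rw [← neg_neg (⨆ i, -g i), ← er_neg_iSup (fun i => -g i)]
  simp

lemma er_exists_lt {P : EReal} (hP : P ≠ ⊥) : ∃ b : ℝ, (b : EReal) < P := by
  induction P with
  | bot => exact absurd rfl hP
  | coe p => exact ⟨p - 1, by exact_mod_cast sub_one_lt p⟩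
  | top => exact ⟨0, by simp⟩

end Aux

section Aux2
set_option linter.unusedSectionVars false

variable {T : Type*} {X : Type*} [AddCommGroup X] [Module ℝ X] [TopologicalSpace X]
  [IsTopologicalAddGroup X] [ContinuousSMul ℝ X] [LocallyConvexSpace ℝ X] [T2Space X]

lemma lsc_epi_closed {L : X → EReal} (h : LowerSemicontinuous L) : IsClosed (epiSet L) := by
  rw [← isOpen_compl_iff, isOpen_iff_mem_nhds]
  rintro ⟨x, v⟩ hxv
  simp only [Set.mem_compl_iff, epiSet, Set.mem_setOf_eq, not_le] at hxv
  obtain ⟨c, hc1, hc2⟩ := EReal.exists_between_coe_real hxv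
  have h1 : {y | (c : EReal) < L y} ∈ 𝓝 x := h x (c : EReal) hc2
  have h2 : {w : ℝ | w < c} ∈ 𝓝 v := Iio_mem_nhds (by exact_mod_cast hc1)
  rw [nhds_prod_eq]
  refine Filter.mem_of_superset (Filter.prod_mem_prod h1 h2) ?_
  rintro ⟨y, w⟩ ⟨hy, hw⟩
  simp only [Set.mem_compl_iff, epiSet, Set.mem_setOf_eq, not_le]
  exact lt_trans (by exact_mod_cast hw) hy

lemma lsc_add {f g : X → EReal} (hf : LowerSemicontinuous f) (hg : LowerSemicontinuous g)
    (hf' : ∀ x, f x ≠ ⊥) (hg' : ∀ x, g x ≠ ⊥) :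
    LowerSemicontinuous fun x => f x + g x := by
  intro x c hc
  induction c with
  | bot =>
    refine Filter.Eventually.of_forall fun y => ?_
    have : f y + g y ≠ ⊥ := by simp [EReal.add_eq_bot_iff, hf' y, hg' y]
    exact this.bot_lt
  | top => exact absurd hc (by simp)
  | coe c =>
    obtain ⟨a, b, haf, hbg, hab⟩ :
        ∃ a b : ℝ, (a : EReal) < f x ∧ (b : EReal) < g x ∧ c ≤ a + b := by
      by_cases hfx : f x = ⊤
      · obtain ⟨b, hb⟩ := er_exists_lt (hg' x)
        exact ⟨c - b, b, by rw [hfx]; exact EReal.coe_lt_top _, hb, by ring_nf; exact le_refl _⟩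
      · by_cases hgx : g x = ⊤
        · obtain ⟨a, ha⟩ := er_exists_lt (hf' x)
          exact ⟨a, c - a, ha, by rw [hgx]; exact EReal.coe_lt_top _, by ring_nf; exact le_refl _⟩
        · set u := (f x).toReal with hu
          set v := (g x).toReal with hv
          have hfu : f x = (u : EReal) := (EReal.coe_toReal hfx (hf' x)).symm
          have hgv : g x = (v : EReal) := (EReal.coe_toReal hgx (hg' x)).symm
          have hcuv : c < u + v := by
            have hc' : (c : EReal) < f x + g x := hc
            rw [hfu, hgv, ← EReal.coe_add] at hc'
            exact_mod_cast hc'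
          refine ⟨u - (u + v - c) / 2, v - (u + v - c) / 2, ?_, ?_, by linarith⟩
          · rw [hfu]; exact_mod_cast by linarith
          · rw [hgv]; exact_mod_cast by linarith
    have hev := (hf x (a : EReal) haf).and (hg x (b : EReal) hbg)
    refine hev.mono fun y hy => ?_
    have h1 : ((a + b : ℝ) : EReal) < f y + g y := by
      rw [EReal.coe_add]; exact EReal.add_lt_add hy.1 hy.2
    exact lt_of_le_of_lt (by exact_mod_cast hab) h1

lemma lsc_cmul {f : X → EReal} (hf : LowerSemicontinuous f) {c : ℝ} (hc : 0 ≤ c) :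
    LowerSemicontinuous fun x => (c : EReal) * f x := by
  rcases eq_or_lt_of_le hc with h | h
  · have : (fun x => (c : EReal) * f x) = fun _ => (0 : EReal) := by
      funext x; rw [← h]; simp
    rw [this]; exact lowerSemicontinuous_const
  · intro x d hd
    obtain ⟨e, hde, hef⟩ := EReal.exists_between_coe_real hd
    have hcb : (c : EReal) * ((e / c : ℝ) : EReal) = (e : EReal) := by
      rw [← EReal.coe_mul, mul_div_cancel₀ _ (ne_of_gt h)]
    have hbf : ((e / c : ℝ) : EReal) < f x := by
      by_contra hle
      push_neg at hle
      have h2 := mul_le_mul_of_nonneg_left hle (by exact_mod_cast hc : (0 : EReal) ≤ (c : EReal))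
      rw [hcb] at h2
      exact absurd (lt_of_lt_of_le hef h2) (lt_irrefl _)
    refine (hf x _ hbf).mono fun y hy => ?_
    have h3 : (e : EReal) ≤ (c : EReal) * f y := by
      rw [← hcb]
      exact mul_le_mul_of_nonneg_left hy.le (by exact_mod_cast hc)
    exact lt_of_lt_of_le hde h3

lemma lsc_sum {ι : Type*} (s : Finset ι) (g : ι → X → EReal)
    (hg : ∀ i ∈ s, LowerSemicontinuous (g i)) (hg' : ∀ i ∈ s, ∀ x, g i x ≠ ⊥) :
    LowerSemicontinuous (fun x => ∑ i ∈ s, g i x) := by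
  induction s using Finset.cons_induction with
  | empty => simpa using lowerSemicontinuous_const
  | @cons a s ha ih =>
    have h1 : LowerSemicontinuous fun x => g a x + ∑ i ∈ s, g i x :=
      lsc_add (hg a (Finset.mem_cons_self a s))
        (ih (fun i hi => hg i (Finset.mem_cons_of_mem hi))
          (fun i hi => hg' i (Finset.mem_cons_of_mem hi)))
        (hg' a (Finset.mem_cons_self a s))
        (fun x => er_sum_ne_bot fun i hi => hg' i (Finset.mem_cons_of_mem hi) x)
    simpa only [Finset.sum_cons] using h1

end Aux2
section Aux3
set_option linter.unusedSectionVars false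

variable {T : Type*} {X : Type*} [AddCommGroup X] [Module ℝ X] [TopologicalSpace X]
  [IsTopologicalAddGroup X] [ContinuousSMul ℝ X] [LocallyConvexSpace ℝ X] [T2Space X]

/-- Convexity as an inequality. -/
def ConvIneq (L : X → EReal) : Prop :=
  ∀ x y : X, ∀ a b : ℝ, 0 ≤ a → 0 ≤ b → a + b = 1 →
    L (a • x + b • y) ≤ (a : EReal) * L x + (b : EReal) * L y

lemma convIneq_of_epi {L : X → EReal} (hbot : ∀ x, L x ≠ ⊥) (hconv : Convex ℝ (epiSet L)) :
    ConvIneq L := by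
  intro x y a b ha hb hab
  rcases eq_or_lt_of_le ha with h | ha'
  · have hb1 : b = 1 := by linarith
    rw [← h, hb1]; simp
  rcases eq_or_lt_of_le hb with h | hb'
  · have ha1 : a = 1 := by linarith
    rw [← h, ha1]; simp
  by_cases hx : L x = ⊤
  · rw [hx, EReal.coe_mul_top_of_pos ha', EReal.top_add_of_ne_bot (er_mul_ne_bot hb (hbot y))]
    exact le_top
  by_cases hy : L y = ⊤
  · rw [hy, EReal.coe_mul_top_of_pos hb', EReal.add_top_of_ne_bot (er_mul_ne_bot ha (hbot x))]
    exact le_top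
  have hux : L x = (((L x).toReal : ℝ) : EReal) := (EReal.coe_toReal hx (hbot x)).symm
  have hvy : L y = (((L y).toReal : ℝ) : EReal) := (EReal.coe_toReal hy (hbot y)).symm
  set u := (L x).toReal
  set v := (L y).toReal
  have hmx : ((x, u) : X × ℝ) ∈ epiSet L := by
    simp only [epiSet, Set.mem_setOf_eq]; exact le_of_eq hux
  have hmy : ((y, v) : X × ℝ) ∈ epiSet L := by
    simp only [epiSet, Set.mem_setOf_eq]; exact le_of_eq hvy
  have hmem := hconv hmx hmy ha hb hab
  simp only [epiSet, Prod.smul_mk, Prod.mk_add_mk, smul_eq_mul, Set.mem_setOf_eq] at hmem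
  rw [hux, hvy, ← EReal.coe_mul, ← EReal.coe_mul, ← EReal.coe_add]
  exact hmem

lemma epi_convex_of_convIneq {L : X → EReal} (h : ConvIneq L) : Convex ℝ (epiSet L) := by
  rintro ⟨x, u⟩ hxu ⟨y, v⟩ hyv a b ha hb hab
  simp only [epiSet, Set.mem_setOf_eq] at hxu hyv ⊢
  simp only [Prod.smul_mk, Prod.mk_add_mk, smul_eq_mul]
  calc L (a • x + b • y) ≤ (a : EReal) * L x + (b : EReal) * L y := h x y a b ha hb hab
    _ ≤ (a : EReal) * (u : EReal) + (b : EReal) * (v : EReal) :=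
        add_le_add (mul_le_mul_of_nonneg_left hxu (by exact_mod_cast ha))
          (mul_le_mul_of_nonneg_left hyv (by exact_mod_cast hb))
    _ = ((a * u + b * v : ℝ) : EReal) := by rw [EReal.coe_add, EReal.coe_mul, EReal.coe_mul]

lemma lag_ne_bot {f : X → EReal} {ft : T → X → EReal} (hfb : ∀ x, f x ≠ ⊥)
    (hftb : ∀ t, ∀ x, ft t x ≠ ⊥) {H : Finset T} {lam : T → ℝ}
    (hlam : ∀ t ∈ H, 0 ≤ lam t) (x : X) : lagFn f ft H lam x ≠ ⊥ := by
  unfold lagFn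
  rw [Ne, EReal.add_eq_bot_iff]
  push_neg
  exact ⟨hfb x, er_sum_ne_bot fun t ht => er_mul_ne_bot (hlam t ht) (hftb t x)⟩

lemma lag_lsc {f : X → EReal} {ft : T → X → EReal} (hf : InGamma f) (hft : ∀ t, InGamma (ft t))
    {H : Finset T} {lam : T → ℝ} (hlam : ∀ t ∈ H, 0 ≤ lam t) :
    LowerSemicontinuous (lagFn f ft H lam) := by
  unfold lagFn
  exact lsc_add hf.2
    (lsc_sum H (fun t x => ((lam t : ℝ) : EReal) * ft t x)
      (fun t ht => lsc_cmul (hft t).2 (hlam t ht))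
      (fun t ht x => er_mul_ne_bot (hlam t ht) ((hft t).1.1 x)))
    hf.1.1
    (fun x => er_sum_ne_bot fun t ht => er_mul_ne_bot (hlam t ht) ((hft t).1.1 x))

lemma lag_convIneq {f : X → EReal} {ft : T → X → EReal} (hf : InGamma f)
    (hft : ∀ t, InGamma (ft t)) {H : Finset T} {lam : T → ℝ}
    (hlam : ∀ t ∈ H, 0 ≤ lam t) : ConvIneq (lagFn f ft H lam) := by
  have hfb : ∀ x, f x ≠ ⊥ := hf.1.1
  have hftb : ∀ t, ∀ x, ft t x ≠ ⊥ := fun t => (hft t).1.1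
  have hfc : ConvIneq f := convIneq_of_epi hfb hf.1.2.2
  have hftc : ∀ t, ConvIneq (ft t) := fun t => convIneq_of_epi (hftb t) (hft t).1.2.2
  intro x y a b ha hb hab
  unfold lagFn
  have hterm : ∀ t ∈ H, ((lam t : ℝ) : EReal) * ft t (a • x + b • y) ≤
      (a : EReal) * (((lam t : ℝ) : EReal) * ft t x) +
      (b : EReal) * (((lam t : ℝ) : EReal) * ft t y) := by
    intro t ht
    have h1 := mul_le_mul_of_nonneg_left (hftc t x y a b ha hb hab)
      (by exact_mod_cast hlam t ht : (0 : EReal) ≤ ((lam t : ℝ) : EReal))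
    have h2 : ((lam t : ℝ) : EReal) * ((a : EReal) * ft t x + (b : EReal) * ft t y) =
        (a : EReal) * (((lam t : ℝ) : EReal) * ft t x) +
        (b : EReal) * (((lam t : ℝ) : EReal) * ft t y) := by
      rw [er_distrib (hlam t ht) (er_mul_ne_bot ha (hftb t x)) (er_mul_ne_bot hb (hftb t y)),
        mul_left_comm, mul_left_comm ((lam t : ℝ) : EReal) (b : EReal)]
    exact h1.trans_eq h2
  have hsum : ∑ t ∈ H, ((lam t : ℝ) : EReal) * ft t (a • x + b • y) ≤
      (a : EReal) * (∑ t ∈ H, ((lam t : ℝ) : EReal) * ft t x) +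
      (b : EReal) * (∑ t ∈ H, ((lam t : ℝ) : EReal) * ft t y) := by
    rw [er_mul_sum ha _ _ (fun t ht => er_mul_ne_bot (hlam t ht) (hftb t x)),
      er_mul_sum hb _ _ (fun t ht => er_mul_ne_bot (hlam t ht) (hftb t y)),
      ← Finset.sum_add_distrib]
    exact Finset.sum_le_sum hterm
  calc f (a • x + b • y) + ∑ t ∈ H, ((lam t : ℝ) : EReal) * ft t (a • x + b • y)
      ≤ ((a : EReal) * f x + (b : EReal) * f y) +
        ((a : EReal) * (∑ t ∈ H, ((lam t : ℝ) : EReal) * ft t x) +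
         (b : EReal) * (∑ t ∈ H, ((lam t : ℝ) : EReal) * ft t y)) :=
        add_le_add (hfc x y a b ha hb hab) hsum
    _ = (a : EReal) * (f x + ∑ t ∈ H, ((lam t : ℝ) : EReal) * ft t x) +
        (b : EReal) * (f y + ∑ t ∈ H, ((lam t : ℝ) : EReal) * ft t y) := by
        rw [er_distrib ha (hfb x) (er_sum_ne_bot fun t ht => er_mul_ne_bot (hlam t ht) (hftb t x)),
          er_distrib hb (hfb y) (er_sum_ne_bot fun t ht => er_mul_ne_bot (hlam t ht) (hftb t y)),
          add_add_add_comm]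

lemma lag_le_f {f : X → EReal} {ft : T → X → EReal} {H : Finset T} {lam : T → ℝ}
    (hlam : ∀ t ∈ H, 0 ≤ lam t) {x : X} (hx : x ∈ feasSet ft) :
    lagFn f ft H lam x ≤ f x := by
  unfold lagFn
  have h1 : ∑ t ∈ H, ((lam t : ℝ) : EReal) * ft t x ≤ 0 :=
    Finset.sum_nonpos fun t ht => er_mul_nonpos (hlam t ht) (hx t)
  calc f x + ∑ t ∈ H, ((lam t : ℝ) : EReal) * ft t x ≤ f x + 0 := add_le_add le_rfl h1
    _ = f x := add_zero _

end Aux3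
section Aux4
set_option linter.unusedSectionVars false

variable {T : Type*} {X : Type*} [AddCommGroup X] [Module ℝ X] [TopologicalSpace X]
  [IsTopologicalAddGroup X] [ContinuousSMul ℝ X] [LocallyConvexSpace ℝ X] [T2Space X]

/-- View a continuous linear functional as an element of the weak-* dual. -/
def toWD (g : X →L[ℝ] ℝ) : WeakDual ℝ X := g

lemma toWD_apply (g : X →L[ℝ] ℝ) (x : X) : toWD g x = g x := rfl

lemma wd_zero_apply (x : X) : (0 : WeakDual ℝ X) x = (0 : ℝ) := rfl

/-- The conjugate, as a function of a plain continuous linear functional. -/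
def conj' (L : X → EReal) (g : X →L[ℝ] ℝ) : EReal := ⨆ x : X, (((g x : ℝ) : ℝ) : EReal) - L x

lemma conj'_eq (L : X → EReal) (g : X →L[ℝ] ℝ) : conj L (toWD g) = conj' L g := rfl

lemma conj_zero (L : X → EReal) : conj L (0 : WeakDual ℝ X) = -(⨅ x : X, L x) := by
  unfold conj
  have h : ∀ x : X, ((((0 : WeakDual ℝ X) x : ℝ)) : EReal) - L x = -(L x) := by
    intro x
    rw [wd_zero_apply]
    simp [sub_eq_add_neg]
  simp_rw [h]
  exact er_neg_iInf L

/-- Strict separation of a point from the (closed convex) epigraph. -/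
lemma sep_epi {L : X → EReal} (hcl : IsClosed (epiSet L)) (hconv : Convex ℝ (epiSet L))
    {x₀ : X} {v₀ : ℝ} (hx₀ : L x₀ = (v₀ : EReal)) {z : X} {w : ℝ} (hzw : ¬ L z ≤ (w : EReal)) :
    ∃ (q : X →L[ℝ] ℝ) (s u : ℝ), 0 ≤ s ∧ q z + s * w < u ∧
      ∀ x : X, ∀ v : ℝ, L x ≤ (v : EReal) → u < q x + s * v := by
  have hnm : ((z, w) : X × ℝ) ∉ epiSet L := hzw
  obtain ⟨F, u, hFu, hsep⟩ := geometric_hahn_banach_point_closed hconv hcl hnm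
  set q : X →L[ℝ] ℝ := F.comp (ContinuousLinearMap.inl ℝ X ℝ) with hq
  set s : ℝ := F ((0 : X), (1 : ℝ)) with hs
  have hF : ∀ (x : X) (v : ℝ), F (x, v) = q x + s * v := by
    intro x v
    have h1 : ((x, v) : X × ℝ) = (x, 0) + v • ((0 : X), (1 : ℝ)) := by
      simp [Prod.ext_iff]
    rw [h1, map_add, map_smul, smul_eq_mul]
    simp only [hq, ContinuousLinearMap.comp_apply, ContinuousLinearMap.inl_apply]
    ring
  have hnn : 0 ≤ s := by
    by_contra hneg
    push_neg at hneg
    obtain ⟨n, hn⟩ := exists_nat_ge ((q x₀ + s * v₀ - u) / (-s))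
    have hmem : ((x₀, v₀ + n) : X × ℝ) ∈ epiSet L := by
      simp only [epiSet, Set.mem_setOf_eq, hx₀]
      exact_mod_cast le_add_of_nonneg_right (Nat.cast_nonneg n)
    have h2 := hsep _ hmem
    rw [hF] at h2
    rw [div_le_iff₀ (by linarith : (0 : ℝ) < -s)] at hn
    have h3 := mul_add s v₀ (n : ℝ)
    nlinarith
  refine ⟨q, s, u, hnn, ?_, fun x v hv => ?_⟩
  · rw [← hF]; exact hFu
  · rw [← hF]; exact hsep _ hv

/-- From a strict separation with positive vertical component, an affine minorant. -/
lemma sep_minorant {L : X → EReal} (hbot : ∀ x, L x ≠ ⊥)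
    {q : X →L[ℝ] ℝ} {s u : ℝ} (hs : 0 < s)
    (hsep : ∀ x : X, ∀ v : ℝ, L x ≤ (v : EReal) → u < q x + s * v) :
    ∀ x : X, ((((-s⁻¹) • q) x : ℝ) : EReal) - L x ≤ ((-u / s : ℝ) : EReal) := by
  intro x
  by_cases hT : L x = ⊤
  · rw [hT, EReal.sub_top]; exact bot_le
  · have hv : L x = (((L x).toReal : ℝ) : EReal) := (EReal.coe_toReal hT (hbot x)).symm
    set v := (L x).toReal
    have h1 := hsep x v (le_of_eq hv)
    have happ : ((-s⁻¹) • q) x = -s⁻¹ * q x := by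
      rw [ContinuousLinearMap.smul_apply, smul_eq_mul]
    have h2 : -s⁻¹ * q x - v ≤ -u / s := by
      rw [le_div_iff₀ hs]
      have key : (-s⁻¹ * q x - v) * s = -q x - v * s := by
        field_simp
      linarith
    rw [hv, happ]
    exact_mod_cast h2

end Aux4
section Aux5
set_option linter.unusedSectionVars false

variable {T : Type*} {X : Type*} [AddCommGroup X] [Module ℝ X] [TopologicalSpace X]
  [IsTopologicalAddGroup X] [ContinuousSMul ℝ X] [LocallyConvexSpace ℝ X] [T2Space X]

/-- Key biconjugation-type result via Hahn–Banach separation: if every continuous affine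
function with slope `q` and value `r` at `xb` admissible for `conj L` satisfies the
subgradient-type inequality, then `L xb ≤ r`. -/
lemma key_sep {L : X → EReal} (hbot : ∀ x, L x ≠ ⊥) (hlsc : LowerSemicontinuous L)
    (hconv : Convex ℝ (epiSet L)) {x₀ : X} (hx₀ : L x₀ ≠ ⊤) {r : ℝ} {xb : X}
    (hsub : ∀ g : X →L[ℝ] ℝ, ((g xb : ℝ) : EReal) - (r : EReal) ≤ conj' L g) :
    L xb ≤ (r : EReal) := by
  by_contra hc
  have hcl := lsc_epi_closed hlsc
  set v₀ := (L x₀).toReal with hv₀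
  have hx₀' : L x₀ = (v₀ : EReal) := (EReal.coe_toReal hx₀ (hbot x₀)).symm
  -- Step 0 : an affine continuous minorant of L
  obtain ⟨q, s, u, hs0, hlt, hsep⟩ := sep_epi hcl hconv hx₀' (z := x₀) (w := v₀ - 1)
    (by rw [hx₀']; exact not_le.2 (by exact_mod_cast sub_one_lt v₀))
  have hs : 0 < s := by
    have h1 := hsep x₀ v₀ (le_of_eq hx₀')
    nlinarith [mul_sub s v₀ 1]
  set q₁ : X →L[ℝ] ℝ := (-s⁻¹) • q with hq₁
  have hmin := sep_minorant hbot hs hsep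
  set c₁ : ℝ := -u / s with hc₁
  -- Step 1 : separate (xb, r) from the epigraph
  obtain ⟨q₂, s₂, u₂, hs₂0, hlt₂, hsep₂⟩ := sep_epi hcl hconv hx₀' (z := xb) (w := r) hc
  rcases eq_or_lt_of_le hs₂0 with hs₂z | hs₂p
  · -- vertical separating hyperplane
    rw [← hs₂z] at hlt₂ hsep₂
    simp only [zero_mul, add_zero] at hlt₂ hsep₂
    set d := u₂ - q₂ xb with hd
    have hdpos : 0 < d := by simp only [hd]; linarith
    set M := r + c₁ - q₁ xb with hM
    set t := max 1 ((M + 1) / d) with ht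
    have ht1 : (1 : ℝ) ≤ t := le_max_left _ _
    have ht0 : (0 : ℝ) ≤ t := by linarith
    have htd : M + 1 ≤ t * d := by
      calc M + 1 = ((M + 1) / d) * d := (div_mul_cancel₀ _ (ne_of_gt hdpos)).symm
        _ ≤ t * d := mul_le_mul_of_nonneg_right (le_max_right _ _) (le_of_lt hdpos)
    have hminor : ∀ x : X, ((((q₁ - t • q₂) x : ℝ)) : EReal) - L x ≤
        ((c₁ - t * u₂ : ℝ) : EReal) := by
      intro x
      by_cases hT : L x = ⊤
      · rw [hT, EReal.sub_top]; exact bot_le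
      · have hv : L x = (((L x).toReal : ℝ) : EReal) := (EReal.coe_toReal hT (hbot x)).symm
        set v := (L x).toReal
        have h1 : u₂ < q₂ x := hsep₂ x v (le_of_eq hv)
        have h2 : q₁ x - v ≤ c₁ := by
          have h3 := hmin x
          rw [hv] at h3
          exact_mod_cast h3
        have happ : (q₁ - t • q₂) x = q₁ x - t * q₂ x := by
          simp [ContinuousLinearMap.sub_apply, ContinuousLinearMap.smul_apply]
        rw [happ, hv]
        have h4 : q₁ x - t * q₂ x - v ≤ c₁ - t * u₂ := by nlinarith
        exact_mod_cast h4
    have hconjle : conj' L (q₁ - t • q₂) ≤ ((c₁ - t * u₂ : ℝ) : EReal) := iSup_le hminor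
    have h5 := (hsub (q₁ - t • q₂)).trans hconjle
    have happ : (q₁ - t • q₂) xb = q₁ xb - t * q₂ xb := by
      simp [ContinuousLinearMap.sub_apply, ContinuousLinearMap.smul_apply]
    rw [happ] at h5
    have h6 : q₁ xb - t * q₂ xb - r ≤ c₁ - t * u₂ := by exact_mod_cast h5
    nlinarith [mul_sub t u₂ (q₂ xb)]
  · -- non-vertical separating hyperplane
    have hminor := sep_minorant hbot hs₂p hsep₂
    have hconjle : conj' L ((-s₂⁻¹) • q₂) ≤ ((-u₂ / s₂ : ℝ) : EReal) := iSup_le hminor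
    have h5 := (hsub ((-s₂⁻¹) • q₂)).trans hconjle
    have happ : ((-s₂⁻¹) • q₂) xb = -s₂⁻¹ * q₂ xb := by
      rw [ContinuousLinearMap.smul_apply, smul_eq_mul]
    rw [happ] at h5
    have h6 : -s₂⁻¹ * q₂ xb - r ≤ -u₂ / s₂ := by exact_mod_cast h5
    rw [le_div_iff₀ hs₂p] at h6
    have key : (-s₂⁻¹ * q₂ xb - r) * s₂ = -q₂ xb - r * s₂ := by field_simp
    nlinarith
end Aux5
section Aux6
set_option linter.unusedSectionVars false

variable {T : Type*} {X : Type*} [AddCommGroup X] [Module ℝ X] [TopologicalSpace X]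
  [IsTopologicalAddGroup X] [ContinuousSMul ℝ X] [LocallyConvexSpace ℝ X] [T2Space X]

lemma er_neg_add_eq (a b : ℝ) : ((-a : ℝ) : EReal) + (b : EReal) = (b : EReal) - (a : EReal) := by
  rw [← EReal.coe_sub, ← EReal.coe_add]
  exact congrArg _ (by ring)

lemma phi_zero_eq (f : X → EReal) (ft : T → X → EReal) (Hfam : Set (Finset T)) :
    phiVal f ft Hfam (0 : WeakDual ℝ X) = -dualVal f ft Hfam := by
  unfold phiVal dualVal
  simp_rw [conj_zero, er_neg_iSup]

lemma weak_duality (f : X → EReal) (ft : T → X → EReal) (Hfam : Set (Finset T)) :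
    dualVal f ft Hfam ≤ primalVal f ft := by
  unfold dualVal primalVal
  refine iSup_le fun H => iSup_le fun hH => iSup_le fun lam => iSup_le fun hlam => ?_
  refine le_iInf fun x => le_iInf fun hx => ?_
  exact (iInf_le _ x).trans (lag_le_f hlam hx)

lemma mem_subdiff (f : X → EReal) (ft : T → X → EReal) (Hfam : Set (Finset T))
    {xb : X} {r : ℝ} (hfeas : xb ∈ feasSet ft) (hfx : f xb = (r : EReal))
    (hD : dualVal f ft Hfam = (r : EReal)) :
    xb ∈ dualSubdiff (phiVal f ft Hfam) 0 := by
  have hphi0 : phiVal f ft Hfam 0 = ((-r : ℝ) : EReal) := by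
    rw [phi_zero_eq, hD, ← EReal.coe_neg]
  simp only [dualSubdiff, Set.mem_setOf_eq]
  refine ⟨⟨by rw [hphi0]; exact EReal.coe_ne_top _, by rw [hphi0]; exact EReal.coe_ne_bot _⟩, ?_⟩
  intro q
  have e1 : q xb - (0 : WeakDual ℝ X) xb = q xb := by rw [wd_zero_apply, sub_zero]
  rw [hphi0, e1]
  refine le_iInf fun H => le_iInf fun hH => le_iInf fun lam => le_iInf fun hlam => ?_
  have h2 : lagFn f ft H lam xb ≤ (r : EReal) := (lag_le_f hlam hfeas).trans (le_of_eq hfx)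
  have h3 : ((q xb : ℝ) : EReal) - (r : EReal) ≤ ((q xb : ℝ) : EReal) - lagFn f ft H lam xb :=
    EReal.sub_le_sub le_rfl h2
  have h4 : ((q xb : ℝ) : EReal) - lagFn f ft H lam xb ≤ conj (lagFn f ft H lam) q :=
    le_iSup (fun x => ((q x : ℝ) : EReal) - lagFn f ft H lam x) xb
  rw [er_neg_add_eq r (q xb)]
  exact h3.trans h4

lemma subdiff_feas {f : X → EReal} {ft : T → X → EReal} {Hfam : Set (Finset T)}
    (hf : InGamma f) (hft : ∀ t, InGamma (ft t)) (hcov : CoveringFam Hfam)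
    {xb : X} (hx : xb ∈ dualSubdiff (phiVal f ft Hfam) 0) :
    ∃ r : ℝ, dualVal f ft Hfam = (r : EReal) ∧ xb ∈ feasSet ft ∧ f xb ≤ (r : EReal) := by
  classical
  simp only [dualSubdiff, Set.mem_setOf_eq] at hx
  obtain ⟨⟨hnt, hnb⟩, hineq⟩ := hx
  have hphi := phi_zero_eq f ft Hfam
  have hDt : dualVal f ft Hfam ≠ ⊤ := by
    intro h; apply hnb; rw [hphi, h]; simp
  have hDb : dualVal f ft Hfam ≠ ⊥ := by
    intro h; apply hnt; rw [hphi, h]; simp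
  set r := (dualVal f ft Hfam).toReal with hr
  have hD : dualVal f ft Hfam = (r : EReal) := (EReal.coe_toReal hDt hDb).symm
  have hphi0 : phiVal f ft Hfam 0 = ((-r : ℝ) : EReal) := by
    rw [hphi, hD, ← EReal.coe_neg]
  have hkey : ∀ H ∈ Hfam, ∀ lam : T → ℝ, (∀ t ∈ H, 0 ≤ lam t) →
      lagFn f ft H lam xb ≤ (r : EReal) := by
    intro H hH lam hlam
    have hbot : ∀ x, lagFn f ft H lam x ≠ ⊥ :=
      lag_ne_bot hf.1.1 (fun t => (hft t).1.1) hlam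
    have hlsc := lag_lsc hf hft hlam
    have hconv := epi_convex_of_convIneq (lag_convIneq hf hft hlam)
    have hle0 : phiVal f ft Hfam 0 ≤ conj (lagFn f ft H lam) (0 : WeakDual ℝ X) := by
      unfold phiVal
      exact iInf_le_of_le H (iInf_le_of_le hH (iInf_le_of_le lam (iInf_le _ hlam)))
    have hex : ∃ x₀, lagFn f ft H lam x₀ ≠ ⊤ := by
      by_contra hall
      push_neg at hall
      have htop : (⨅ x : X, lagFn f ft H lam x) = ⊤ := by
        rw [iInf_eq_top]; exact hall
      rw [conj_zero, htop, hphi0] at hle0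
      simp at hle0
    obtain ⟨x₀, hx₀⟩ := hex
    refine key_sep hbot hlsc hconv hx₀ ?_
    intro g
    have h1 := hineq (toWD g)
    rw [hphi0] at h1
    have e1 : (toWD g) xb - (0 : WeakDual ℝ X) xb = g xb := by
      rw [toWD_apply, wd_zero_apply, sub_zero]
    rw [e1] at h1
    have h2 : phiVal f ft Hfam (toWD g) ≤ conj' (lagFn f ft H lam) g := by
      rw [← conj'_eq]
      unfold phiVal
      exact iInf_le_of_le H (iInf_le_of_le hH (iInf_le_of_le lam (iInf_le _ hlam)))
    rw [er_neg_add_eq r (g xb)] at h1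
    exact h1.trans h2
  have hHfam : Hfam.Nonempty := by
    by_contra hemp
    rw [Set.not_nonempty_iff_eq_empty] at hemp
    apply hnt
    unfold phiVal
    rw [hemp]
    simp
  obtain ⟨H₀, hH₀⟩ := hHfam
  have hfr : f xb ≤ (r : EReal) := by
    have h0 := hkey H₀ hH₀ (fun _ => 0) (fun t _ => le_refl (0 : ℝ))
    simpa [lagFn] using h0
  refine ⟨r, hD, ?_, hfr⟩
  intro t
  have hmemU : t ∈ ⋃ H ∈ Hfam, (H : Set T) := by
    rw [hcov]; trivial
  simp only [Set.mem_iUnion, Finset.mem_coe] at hmemU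
  obtain ⟨H, hH, htH⟩ := hmemU
  by_contra hpos
  push_neg at hpos
  have hfxb_bot : f xb ≠ ⊥ := hf.1.1 xb
  have hfxb_top : f xb ≠ ⊤ := by
    intro h; rw [h] at hfr; exact absurd hfr (by simp)
  
  set w := (f xb).toReal with hwdef
  have hw : f xb = (w : EReal) := (EReal.coe_toReal hfxb_top hfxb_bot).symm
  have hn : ∀ n : ℕ, f xb + ((n : ℝ) : EReal) * ft t xb ≤ (r : EReal) := by
    intro n
    have hlam : ∀ t' ∈ H, 0 ≤ (fun t' => if t' = t then (n : ℝ) else 0) t' := by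
      intro t' _
      by_cases h : t' = t <;> simp [h]
    have hk := hkey H hH _ hlam
    unfold lagFn at hk
    have hsum : ∑ t' ∈ H, ((((fun t' => if t' = t then (n : ℝ) else 0) t' : ℝ)) : EReal) * ft t' xb
        = ((n : ℝ) : EReal) * ft t xb := by
      rw [Finset.sum_eq_single_of_mem t htH]
      · simp
      · intro t' _ hne
        simp [hne]
    rw [hsum] at hk
    exact hk
  by_cases htop : ft t xb = ⊤
  · have h1 := hn 1
    rw [htop] at h1
    have hone : (((1 : ℕ) : ℝ) : EReal) * (⊤ : EReal) = ⊤ := by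
      rw [Nat.cast_one]
      exact EReal.coe_mul_top_of_pos one_pos
    rw [hone] at h1
    rw [EReal.add_top_of_ne_bot hfxb_bot] at h1
    exact absurd h1 (by simp)
  · set v := (ft t xb).toReal with hvdef
    have hvv : ft t xb = (v : EReal) := (EReal.coe_toReal htop ((hft t).1.1 xb)).symm
    have hvpos : 0 < v := by
      rw [hvv] at hpos
      exact_mod_cast hpos
    obtain ⟨n, hngt⟩ := exists_nat_gt ((r - w) / v)
    have h1 := hn n
    rw [hw, hvv, ← EReal.coe_mul, ← EReal.coe_add] at h1
    have h2 : w + n * v ≤ r := by exact_mod_cast h1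
    rw [div_lt_iff₀ hvpos] at hngt
    linarith

end Aux6



/-- for a covering family `𝓗`, `𝓗`-reverse strong duality
(`min (P) = sup (D_𝓗) ∈ ℝ`) holds iff `φ_𝓗` is subdifferentiable at `0_{X*}`;
in that case `∂φ_𝓗(0_{X*}) = sol (P)`. -/
theorem reverse_strong_duality_iff_subdifferentiable {T : Type*} {X : Type*} [AddCommGroup X] [Module ℝ X] [TopologicalSpace X]
    [IsTopologicalAddGroup X] [ContinuousSMul ℝ X] [LocallyConvexSpace ℝ X] [T2Space X]
    (f : X → EReal) (ft : T → X → EReal)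
    (hf : InGamma f) (hft : ∀ t, InGamma (ft t))
    (Hfam : Set (Finset T)) (hHmem : ∀ H ∈ Hfam, H.Nonempty) (hcov : CoveringFam Hfam)
    (hEdom : ∃ x ∈ feasSet ft, f x ≠ ⊤) :
    ((∃ xb ∈ feasSet ft, ∃ r : ℝ, f xb = (r : EReal) ∧ dualVal f ft Hfam = (r : EReal)) ↔
      (dualSubdiff (phiVal f ft Hfam) 0).Nonempty) ∧
    ((dualSubdiff (phiVal f ft Hfam) 0).Nonempty →
      dualSubdiff (phiVal f ft Hfam) 0 = solP f ft) := by
  constructor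
  · constructor
    · rintro ⟨xb, hfeas, r, hfx, hD⟩
      exact ⟨xb, mem_subdiff f ft Hfam hfeas hfx hD⟩
    · rintro ⟨xb, hxb⟩
      obtain ⟨r, hD, hfeas, hle⟩ := subdiff_feas hf hft hcov hxb
      have hge : (r : EReal) ≤ f xb := by
        calc (r : EReal) = dualVal f ft Hfam := hD.symm
          _ ≤ primalVal f ft := weak_duality f ft Hfam
          _ ≤ f xb := iInf₂_le xb hfeas
      exact ⟨xb, hfeas, r, le_antisymm hle hge, hD⟩
  · intro hne
    obtain ⟨x₁, hx₁⟩ := hne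
    obtain ⟨r, hD, hfeas₁, hle₁⟩ := subdiff_feas hf hft hcov hx₁
    have hprim : primalVal f ft = (r : EReal) := by
      apply le_antisymm
      · exact (iInf₂_le x₁ hfeas₁).trans hle₁
      · rw [← hD]; exact weak_duality f ft Hfam
    ext x
    constructor
    · intro hx
      obtain ⟨r', hD', hfeas, hle⟩ := subdiff_feas hf hft hcov hx
      have hrr : (r' : EReal) = (r : EReal) := by rw [← hD, ← hD']
      refine ⟨hfeas, ?_⟩
      rw [hprim]
      refine le_antisymm (hrr ▸ hle) ?_
      rw [← hprim]
      exact iInf₂_le x hfeas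
    · rintro ⟨hfeas, hfx⟩
      exact mem_subdiff f ft Hfam hfeas (by rw [hfx, hprim]) hD

end
end

section
/- (First H-optimality condition for (P)) Assume inf(P) = max(D_H), i.e., the dual optimal value is attained and equals inf(P), and let x̄ ∈ E ∩ dom f. Then the following are equivalent: (i) x̄ ∈ sol(P); (ii) for every (H, λ) ∈ sol(D_H), one has 0_{X*} ∈ ∂( f + Σ_{t∈H} λ_t f_t )(x̄) and λ_t f_t(x̄) = 0 for all t ∈ H; (iii) there exists (H, λ) ∈ sol(D_H) such that 0_{X*} ∈ ∂( f + Σ_{t∈H} λ_t f_t )(x̄) and λ_t f_t(x̄) = 0 for all t ∈ H. -/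
open Pointwise Filter Topology

noncomputable section

/-- first `𝓗`-optimality condition for (P): if
`inf (P) = max (D_𝓗)` (dual value attained) and `x̄ ∈ E ∩ dom f`, then `x̄ ∈ sol (P)` iff
the KKT-type condition holds for every dual solution `(H,λ)`, iff it holds for some
dual solution `(H,λ)`. -/
theorem first_optimality_condition {T : Type*} {X : Type*} [AddCommGroup X] [Module ℝ X] [TopologicalSpace X]
    [IsTopologicalAddGroup X] [ContinuousSMul ℝ X] [LocallyConvexSpace ℝ X] [T2Space X]
    (f : X → EReal) (ft : T → X → EReal)
    (hf : IsProperConvex f) (hft : ∀ t, IsProperConvex (ft t))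
    (Hfam : Set (Finset T)) (hHne : Hfam.Nonempty) (hHmem : ∀ H ∈ Hfam, H.Nonempty)
    (hattain : ∃ H ∈ Hfam, ∃ lam : T → ℝ, (∀ t ∈ H, 0 ≤ lam t) ∧
      (⨅ x : X, lagFn f ft H lam x) = dualVal f ft Hfam)
    (hdual : primalVal f ft = dualVal f ft Hfam)
    (xb : X) (hfeas : xb ∈ feasSet ft) (hdom : f xb ≠ ⊤) :
    (xb ∈ solP f ft ↔
      ∀ H ∈ Hfam, ∀ lam : T → ℝ, (∀ t ∈ H, 0 ≤ lam t) →
        (⨅ x : X, lagFn f ft H lam x) = dualVal f ft Hfam →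
        ((0 : WeakDual ℝ X) ∈ fenchelSubdiff (lagFn f ft H lam) xb ∧
          ∀ t ∈ H, (lam t : EReal) * ft t xb = 0)) ∧
    (xb ∈ solP f ft ↔
      ∃ H ∈ Hfam, ∃ lam : T → ℝ, (∀ t ∈ H, 0 ≤ lam t) ∧
        (⨅ x : X, lagFn f ft H lam x) = dualVal f ft Hfam ∧
        (0 : WeakDual ℝ X) ∈ fenchelSubdiff (lagFn f ft H lam) xb ∧
        ∀ t ∈ H, (lam t : EReal) * ft t xb = 0) := by
  classical
  -- basic facts about xb
  obtain ⟨hfbot, -, -⟩ := hf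
  obtain ⟨a, ha⟩ : ∃ a : ℝ, f xb = (a : EReal) :=
    ⟨(f xb).toReal, (EReal.coe_toReal hdom (hfbot xb)).symm⟩
  have hftreal : ∀ t, ft t xb = (((ft t xb).toReal : ℝ) : EReal) ∧ (ft t xb).toReal ≤ 0 := by
    intro t
    have h0 : ft t xb ≤ 0 := hfeas t
    have hne_top : ft t xb ≠ ⊤ := fun h => by simp [h] at h0
    have hco := EReal.coe_toReal hne_top ((hft t).1 xb)
    refine ⟨hco.symm, ?_⟩
    have : (((ft t xb).toReal : ℝ) : EReal) ≤ ((0:ℝ) : EReal) := by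
      rw [hco]; simpa using h0
    exact_mod_cast this
  have coe_sum : ∀ (H : Finset T) (g : T → ℝ),
      ((∑ t ∈ H, g t : ℝ) : EReal) = ∑ t ∈ H, ((g t : ℝ) : EReal) := by
    intro H g
    induction H using Finset.cons_induction with
    | empty => simp
    | cons t s hts ih => rw [Finset.sum_cons, Finset.sum_cons, EReal.coe_add, ih]
  -- the sum of multiplier terms at xb is a nonpositive real
  have hterm : ∀ (H : Finset T) (lam : T → ℝ), (∀ t ∈ H, 0 ≤ lam t) →
      ∃ S : ℝ, S ≤ 0 ∧ (∑ t ∈ H, (lam t : EReal) * ft t xb) = (S : EReal) ∧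
        (S = 0 → ∀ t ∈ H, (lam t : EReal) * ft t xb = 0) := by
    intro H lam hnn
    set c : T → ℝ := fun t => (ft t xb).toReal with hc
    have hsum : (∑ t ∈ H, (lam t : EReal) * ft t xb)
        = ((∑ t ∈ H, lam t * c t : ℝ) : EReal) := by
      rw [coe_sum]
      refine Finset.sum_congr rfl fun t ht => ?_
      rw [(hftreal t).1, ← EReal.coe_mul]
    have hle : ∀ t ∈ H, lam t * c t ≤ 0 := fun t ht =>
      mul_nonpos_iff.2 (Or.inl ⟨hnn t ht, (hftreal t).2⟩)
    refine ⟨∑ t ∈ H, lam t * c t, Finset.sum_nonpos hle, hsum, fun hS0 t ht => ?_⟩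
    have := (Finset.sum_eq_zero_iff_of_nonpos hle).1 hS0 t ht
    rw [(hftreal t).1, ← EReal.coe_mul, this, EReal.coe_zero]
  have hprimal_le : primalVal f ft ≤ f xb := iInf₂_le xb hfeas
  -- (i) → (ii)
  have himp1 : xb ∈ solP f ft →
      ∀ H ∈ Hfam, ∀ lam : T → ℝ, (∀ t ∈ H, 0 ≤ lam t) →
        (⨅ x : X, lagFn f ft H lam x) = dualVal f ft Hfam →
        ((0 : WeakDual ℝ X) ∈ fenchelSubdiff (lagFn f ft H lam) xb ∧
          ∀ t ∈ H, (lam t : EReal) * ft t xb = 0) := by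
    intro hsol H hH lam hnn hopt
    obtain ⟨S, hS0, hSsum, hSslack⟩ := hterm H lam hnn
    have hchain : f xb ≤ lagFn f ft H lam xb := by
      calc f xb = primalVal f ft := hsol.2
        _ = dualVal f ft Hfam := hdual
        _ = ⨅ x : X, lagFn f ft H lam x := hopt.symm
        _ ≤ lagFn f ft H lam xb := iInf_le _ xb
    have hlagxb : lagFn f ft H lam xb = f xb + (S : EReal) := by
      rw [lagFn, hSsum]
    have hSeq : S = 0 := by
      have h1 : f xb + (S : EReal) ≤ f xb := by
        calc f xb + (S : EReal) ≤ f xb + (0 : EReal) := by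
              apply add_le_add_right
              exact_mod_cast hS0
          _ = f xb := add_zero _
      have h2 : f xb + (S : EReal) = f xb := le_antisymm h1 (by rwa [hlagxb] at hchain)
      rw [ha, ← EReal.coe_add, EReal.coe_eq_coe_iff] at h2
      linarith
    have hlageq : lagFn f ft H lam xb = f xb := by
      rw [hlagxb, hSeq, EReal.coe_zero, add_zero]
    have h0app : ∀ y : X, (0 : WeakDual ℝ X) y = 0 := fun y => rfl
    refine ⟨fun x => ?_, hSslack hSeq⟩
    simp only [h0app, sub_zero, EReal.coe_zero, add_zero]
    calc lagFn f ft H lam xb = f xb := hlageq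
      _ ≤ lagFn f ft H lam x := by
        rw [hsol.2, hdual, ← hopt]; exact iInf_le _ x
  -- (iii) → (i)
  have himp3 : (∃ H ∈ Hfam, ∃ lam : T → ℝ, (∀ t ∈ H, 0 ≤ lam t) ∧
      (⨅ x : X, lagFn f ft H lam x) = dualVal f ft Hfam ∧
      (0 : WeakDual ℝ X) ∈ fenchelSubdiff (lagFn f ft H lam) xb ∧
      ∀ t ∈ H, (lam t : EReal) * ft t xb = 0) → xb ∈ solP f ft := by
    rintro ⟨H, hH, lam, hnn, hopt, hsub, hslack⟩
    have hlageq : lagFn f ft H lam xb = f xb := by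
      rw [lagFn, Finset.sum_eq_zero hslack, add_zero]
    have hmin : ∀ x, lagFn f ft H lam xb ≤ lagFn f ft H lam x := by
      intro x
      have h0app : ∀ y : X, (0 : WeakDual ℝ X) y = 0 := fun y => rfl
      have := hsub x
      simpa only [h0app, sub_zero, EReal.coe_zero, add_zero] using this
    refine ⟨hfeas, le_antisymm ?_ hprimal_le⟩
    calc f xb = lagFn f ft H lam xb := hlageq.symm
      _ ≤ ⨅ x : X, lagFn f ft H lam x := le_iInf hmin
      _ = dualVal f ft Hfam := hopt
      _ = primalVal f ft := hdual.symm
  obtain ⟨H0, hH0, lam0, hnn0, hopt0⟩ := hattain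
  constructor
  · exact ⟨himp1, fun h2 => himp3 ⟨H0, hH0, lam0, hnn0, hopt0,
      (h2 H0 hH0 lam0 hnn0 hopt0).1, (h2 H0 hH0 lam0 hnn0 hopt0).2⟩⟩
  · refine ⟨fun hsol => ?_, himp3⟩
    obtain ⟨hs, hsl⟩ := himp1 hsol H0 hH0 lam0 hnn0 hopt0
    exact ⟨H0, hH0, lam0, hnn0, hopt0, hs, hsl⟩


end
end

section
/- (Optimality condition for (D_H)) Assume min(P) = sup(D_H) ≠ +∞, i.e., the primal value is attained and equals the dual value, and let H ∈ H and λ ∈ ℝ_+^H. Then the following are equivalent: (i) (H, λ) ∈ sol(D_H); (ii) for every x̄ ∈ sol(P), one has 0_{X*} ∈ ∂( f + Σ_{t∈H} λ_t f_t )(x̄) and λ_t f_t(x̄) = 0 for all t ∈ H; (iii) there exists x̄ ∈ sol(P) such that 0_{X*} ∈ ∂( f + Σ_{t∈H} λ_t f_t )(x̄) and λ_t f_t(x̄) = 0 for all t ∈ H. -/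
open Pointwise Filter Topology

noncomputable section

/-- optimality condition for `(D_𝓗)`: if `min (P) = sup (D_𝓗) ≠ +∞`
(primal value attained and equal to the dual value), then for `H ∈ 𝓗`, `λ ∈ ℝ₊^H`:
`(H,λ) ∈ sol (D_𝓗)` iff the KKT-type condition holds for every `x̄ ∈ sol (P)`, iff it
holds for some `x̄ ∈ sol (P)`. -/
theorem dual_optimality_condition {T : Type*} {X : Type*} [AddCommGroup X] [Module ℝ X] [TopologicalSpace X]
    [IsTopologicalAddGroup X] [ContinuousSMul ℝ X] [LocallyConvexSpace ℝ X] [T2Space X]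
    (f : X → EReal) (ft : T → X → EReal)
    (hf : IsProperConvex f) (hft : ∀ t, IsProperConvex (ft t))
    (Hfam : Set (Finset T)) (hHne : Hfam.Nonempty) (hHmem : ∀ H ∈ Hfam, H.Nonempty)
    (hattain : ∃ x ∈ feasSet ft, f x = primalVal f ft)
    (hdual : primalVal f ft = dualVal f ft Hfam)
    (hnetop : primalVal f ft ≠ ⊤)
    (H : Finset T) (hH : H ∈ Hfam) (lam : T → ℝ) (hlam : ∀ t ∈ H, 0 ≤ lam t) :
    ((⨅ x : X, lagFn f ft H lam x) = dualVal f ft Hfam ↔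
      ∀ xb ∈ solP f ft,
        (0 : WeakDual ℝ X) ∈ fenchelSubdiff (lagFn f ft H lam) xb ∧
        ∀ t ∈ H, (lam t : EReal) * ft t xb = 0) ∧
    ((⨅ x : X, lagFn f ft H lam x) = dualVal f ft Hfam ↔
      ∃ xb ∈ solP f ft,
        (0 : WeakDual ℝ X) ∈ fenchelSubdiff (lagFn f ft H lam) xb ∧
        ∀ t ∈ H, (lam t : EReal) * ft t xb = 0) := by
  classical
  obtain ⟨xs, hxs_feas, hxs_val⟩ := hattain
  have hxsP : xs ∈ solP f ft := ⟨hxs_feas, hxs_val⟩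
  have hVne_bot : primalVal f ft ≠ ⊥ := by rw [← hxs_val]; exact hf.1 xs
  obtain ⟨v, hv⟩ : ∃ v : ℝ, primalVal f ft = (v : EReal) := by
    lift primalVal f ft to ℝ using ⟨hnetop, hVne_bot⟩ with v
    exact ⟨v, rfl⟩
  have key : ∀ xb ∈ solP f ft, ∃ r : T → ℝ,
      (∀ t ∈ H, lam t * r t ≤ 0) ∧
      (∀ t ∈ H, (lam t : EReal) * ft t xb = ((lam t * r t : ℝ) : EReal)) ∧
      lagFn f ft H lam xb = ((v + ∑ t ∈ H, lam t * r t : ℝ) : EReal) := by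
    rintro xb ⟨hfeas, hval⟩
    have hterm : ∀ t : T, ∃ r : ℝ, r ≤ 0 ∧ ft t xb = (r : EReal) := by
      intro t
      have h1 : ft t xb ≤ 0 := hfeas t
      have h2 : ft t xb ≠ ⊥ := (hft t).1 xb
      have h3 : ft t xb ≠ ⊤ := by
        intro h; rw [h] at h1; exact (not_le.mpr (lt_of_lt_of_le EReal.zero_lt_top le_rfl)) h1
      lift ft t xb to ℝ using ⟨h3, h2⟩ with r hr
      exact ⟨r, by exact_mod_cast h1, rfl⟩
    choose r hr1 hr2 using hterm
    refine ⟨r, ?_, ?_, ?_⟩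
    · intro t ht; exact mul_nonpos_of_nonneg_of_nonpos (hlam t ht) (hr1 t)
    · intro t ht; rw [hr2 t, ← EReal.coe_mul]
    · have hsum : ∑ t ∈ H, (lam t : EReal) * ft t xb
          = ((∑ t ∈ H, lam t * r t : ℝ) : EReal) := by
        rw [Finset.sum_congr rfl (fun t ht => by rw [hr2 t, ← EReal.coe_mul])]
        exact (map_sum (⟨⟨Real.toEReal, EReal.coe_zero⟩, EReal.coe_add⟩ : ℝ →+ EReal)
          (fun t => lam t * r t) H).symm
      simp only [lagFn, hsum, hval, hv, ← EReal.coe_add]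
  have himp1 : (⨅ x : X, lagFn f ft H lam x) = dualVal f ft Hfam →
      ∀ xb ∈ solP f ft,
        (0 : WeakDual ℝ X) ∈ fenchelSubdiff (lagFn f ft H lam) xb ∧
        ∀ t ∈ H, (lam t : EReal) * ft t xb = 0 := by
    intro hi xb hxb
    obtain ⟨r, hr1, hr2, hr3⟩ := key xb hxb
    have hle : (⨅ x : X, lagFn f ft H lam x) ≤ lagFn f ft H lam xb := iInf_le _ _
    rw [hi, ← hdual, hv, hr3] at hle
    have hs : (0:ℝ) ≤ ∑ t ∈ H, lam t * r t := by
      have := EReal.coe_le_coe_iff.mp hle; linarith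
    have hs0 : ∑ t ∈ H, lam t * r t = 0 := le_antisymm (Finset.sum_nonpos hr1) hs
    have heach : ∀ t ∈ H, lam t * r t = 0 :=
      (Finset.sum_eq_zero_iff_of_nonpos hr1).mp hs0
    constructor
    · have hmin : lagFn f ft H lam xb = ⨅ x : X, lagFn f ft H lam x := by
        rw [hr3, hs0, add_zero, hi, ← hdual, hv]
      intro x
      have h0 : ∀ y : X, (0 : WeakDual ℝ X) y = 0 := fun y => rfl
      simp only [h0, sub_zero, EReal.coe_zero, add_zero]
      rw [hmin]; exact iInf_le _ _
    · intro t ht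
      rw [hr2 t ht, heach t ht, EReal.coe_zero]
  have himp2 : (∃ xb ∈ solP f ft,
        (0 : WeakDual ℝ X) ∈ fenchelSubdiff (lagFn f ft H lam) xb ∧
        ∀ t ∈ H, (lam t : EReal) * ft t xb = 0) →
      (⨅ x : X, lagFn f ft H lam x) = dualVal f ft Hfam := by
    rintro ⟨xb, hxb, hsub, hcomp⟩
    have hsum0 : ∑ t ∈ H, (lam t : EReal) * ft t xb = 0 := Finset.sum_eq_zero hcomp
    have hLxb : lagFn f ft H lam xb = primalVal f ft := by
      simp only [lagFn, hsum0, add_zero, hxb.2]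
    have hge : ∀ x, lagFn f ft H lam xb ≤ lagFn f ft H lam x := by
      intro x
      have h := hsub x
      have h0 : ∀ y : X, (0 : WeakDual ℝ X) y = 0 := fun y => rfl
      simpa [h0] using h
    have hmin : (⨅ x : X, lagFn f ft H lam x) = lagFn f ft H lam xb :=
      le_antisymm (iInf_le _ _) (le_iInf hge)
    rw [hmin, hLxb, hdual]
  exact ⟨⟨fun hi => himp1 hi, fun h => himp2 ⟨xs, hxsP, h xs hxsP⟩⟩,
    ⟨fun hi => ⟨xs, hxsP, himp1 hi xs hxsP⟩, himp2⟩⟩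


end
end
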